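/- For any φ = (v, w) ∈ H¹(ℝ, ℝ²), the operator Δ_ε defined by (Δ_ε φ)₁(x) = (1/h²)[d_e(w(x) − 2v(x) + w(x−h)) + ε d₂(v(x+h) − 2v(x) + v(x−h))] and (Δ_ε φ)₂(x) = (1/h²)[d_o(v(x+h) − 2w(x) + v(x)) + ε d₂(w(x+h) − 2w(x) + w(x−h))] satisfies ⟨Δ_ε φ, φ'⟩_{L²} = 0, provided d_e = d_o. -/

import Mathlib

open MeasureTheory
open scoped ENNReal

lemma l2mul {f g : ℝ → ℝ} (hf : MemLp f 2 (volume : Measure ℝ))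
    (hg : MemLp g 2 (volume : Measure ℝ)) :
    Integrable (fun x => f x * g x) (volume : Measure ℝ) := by
  have h2 : (1 : ℝ≥0∞) / 1 = 1 / 2 + 1 / 2 := by
    rw [ENNReal.div_add_div_same, one_add_one_eq_two,
      ENNReal.div_self two_ne_zero ENNReal.ofNat_ne_top]
    simp
  have := hg.smul (φ := f) (r := 1) hf (hpqr := ⟨by simpa [one_div] using h2.symm⟩)
  rw [memLp_one_iff_integrable] at this
  exact this

lemma shiftL2 {f : ℝ → ℝ} (hf : MemLp f 2 (volume : Measure ℝ)) (c : ℝ) :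
    MemLp (fun x => f (x + c)) 2 (volume : Measure ℝ) :=
  hf.comp_measurePreserving (measurePreserving_add_right volume c)

lemma prodzero {f g f' g' : ℝ → ℝ}
    (hf : ∀ x, HasDerivAt f (f' x) x) (hg : ∀ x, HasDerivAt g (g' x) x)
    (hf2 : MemLp f 2 (volume : Measure ℝ)) (hg2 : MemLp g 2 (volume : Measure ℝ))
    (hf'2 : MemLp f' 2 (volume : Measure ℝ)) (hg'2 : MemLp g' 2 (volume : Measure ℝ)) :
    ∫ x : ℝ, (f' x * g x + f x * g' x) = 0 :=
  integral_eq_zero_of_hasDerivAt_of_integrable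
    (fun x => (hf x).mul (hg x))
    ((l2mul hf'2 hg2).add (l2mul hf2 hg'2)) (l2mul hf2 hg2)

example (f : ℝ → ℝ) (h : ℝ) : ∫ x : ℝ, f (x + h) = ∫ x : ℝ, f x :=
  integral_add_right_eq_self f h

/-- Lemma 4.1: for `φ = (v,w) ∈ H¹(ℝ,ℝ²)` the operator `Δ_ε` satisfies
`⟨Δ_ε φ, φ'⟩_{L²} = 0`, provided `d_e = d_o`. -/
theorem stmt_3 (h ε d₂ de do_ : ℝ) (hh : 0 < h) (hdedo : de = do_)
    (v w v' w' : ℝ → ℝ)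
    (hv : ∀ x, HasDerivAt v (v' x) x) (hw : ∀ x, HasDerivAt w (w' x) x)
    (hv2 : MemLp v 2 (volume : Measure ℝ)) (hw2 : MemLp w 2 (volume : Measure ℝ))
    (hv'2 : MemLp v' 2 (volume : Measure ℝ)) (hw'2 : MemLp w' 2 (volume : Measure ℝ)) :
    ∫ x : ℝ,
      ((1 / h ^ 2) * (de * (w x - 2 * v x + w (x - h))
          + ε * d₂ * (v (x + h) - 2 * v x + v (x - h))) * v' x
      + (1 / h ^ 2) * (do_ * (v (x + h) - 2 * w x + v x)
          + ε * d₂ * (w (x + h) - 2 * w x + w (x - h))) * w' x) = 0 := by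
  subst hdedo
  obtain ⟨c, hc⟩ : ∃ c : ℝ, c = de / h ^ 2 := ⟨_, rfl⟩
  obtain ⟨a, ha⟩ : ∃ a : ℝ, a = ε * d₂ / h ^ 2 := ⟨_, rfl⟩
  obtain ⟨b, hb⟩ : ∃ b : ℝ, b = -2 * c - 2 * a := ⟨_, rfl⟩
  -- shifted functions are in L²
  have hvp : MemLp (fun x => v (x + h)) 2 (volume : Measure ℝ) := shiftL2 hv2 h
  have hvm : MemLp (fun x => v (x - h)) 2 (volume : Measure ℝ) := by
    simpa [sub_eq_add_neg] using shiftL2 hv2 (-h)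
  have hwp : MemLp (fun x => w (x + h)) 2 (volume : Measure ℝ) := shiftL2 hw2 h
  have hwm : MemLp (fun x => w (x - h)) 2 (volume : Measure ℝ) := by
    simpa [sub_eq_add_neg] using shiftL2 hw2 (-h)
  have hv'p : MemLp (fun x => v' (x + h)) 2 (volume : Measure ℝ) := shiftL2 hv'2 h
  have hw'p : MemLp (fun x => w' (x + h)) 2 (volume : Measure ℝ) := shiftL2 hw'2 h
  -- derivatives of shifted functions
  have hvph : ∀ x, HasDerivAt (fun y => v (y + h)) (v' (x + h)) x :=
    fun x => HasDerivAt.comp_add_const x h (hv (x + h))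
  have hwph : ∀ x, HasDerivAt (fun y => w (y + h)) (w' (x + h)) x :=
    fun x => HasDerivAt.comp_add_const x h (hw (x + h))
  -- vanishing integrals
  have hA2 : ∫ x : ℝ, v x * v' x = 0 := by
    have h0 := prodzero hv hv hv2 hv2 hv'2 hv'2
    have e : (fun x : ℝ => v' x * v x + v x * v' x) = fun x : ℝ => (2:ℝ) * (v x * v' x) := by
      funext x; ring
    rw [e, integral_const_mul] at h0
    linarith
  have hB2 : ∫ x : ℝ, w x * w' x = 0 := by
    have h0 := prodzero hw hw hw2 hw2 hw'2 hw'2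
    have e : (fun x : ℝ => w' x * w x + w x * w' x) = fun x : ℝ => (2:ℝ) * (w x * w' x) := by
      funext x; ring
    rw [e, integral_const_mul] at h0
    linarith
  have h1 : (∫ x : ℝ, v' x * w x) + ∫ x : ℝ, v x * w' x = 0 := by
    have h0 := prodzero hv hw hv2 hw2 hv'2 hw'2
    rwa [integral_add (l2mul hv'2 hw2) (l2mul hv2 hw'2)] at h0
  have h2 : (∫ x : ℝ, v' (x + h) * w x) + ∫ x : ℝ, v (x + h) * w' x = 0 := by
    have h0 := prodzero hvph hw hvp hw2 hv'p hw'2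
    rwa [integral_add (l2mul hv'p hw2) (l2mul hvp hw'2)] at h0
  have h3 : (∫ x : ℝ, v' (x + h) * v x) + ∫ x : ℝ, v (x + h) * v' x = 0 := by
    have h0 := prodzero hvph hv hvp hv2 hv'p hv'2
    rwa [integral_add (l2mul hv'p hv2) (l2mul hvp hv'2)] at h0
  have h4 : (∫ x : ℝ, w' (x + h) * w x) + ∫ x : ℝ, w (x + h) * w' x = 0 := by
    have h0 := prodzero hwph hw hwp hw2 hw'p hw'2
    rwa [integral_add (l2mul hw'p hw2) (l2mul hwp hw'2)] at h0
  -- change of variables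
  have e3 : ∫ x : ℝ, w (x - h) * v' x = ∫ x : ℝ, v' (x + h) * w x := by
    have t := integral_add_right_eq_self (μ := volume) (fun x : ℝ => w (x - h) * v' x) h
    simp only [add_sub_cancel_right] at t
    rw [← t]; congr 1; funext x; ring
  have e4 : ∫ x : ℝ, v (x - h) * v' x = ∫ x : ℝ, v' (x + h) * v x := by
    have t := integral_add_right_eq_self (μ := volume) (fun x : ℝ => v (x - h) * v' x) h
    simp only [add_sub_cancel_right] at t
    rw [← t]; congr 1; funext x; ring
  have e5 : ∫ x : ℝ, w (x - h) * w' x = ∫ x : ℝ, w' (x + h) * w x := by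
    have t := integral_add_right_eq_self (μ := volume) (fun x : ℝ => w (x - h) * w' x) h
    simp only [add_sub_cancel_right] at t
    rw [← t]; congr 1; funext x; ring
  -- pointwise decomposition
  have key : ∀ x : ℝ,
      ((1 / h ^ 2) * (de * (w x - 2 * v x + w (x - h))
          + ε * d₂ * (v (x + h) - 2 * v x + v (x - h))) * v' x
      + (1 / h ^ 2) * (de * (v (x + h) - 2 * w x + v x)
          + ε * d₂ * (w (x + h) - 2 * w x + w (x - h))) * w' x)
      = c * (v' x * w x) + c * (w (x - h) * v' x) + a * (v (x + h) * v' x)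
        + a * (v (x - h) * v' x) + b * (v x * v' x) + c * (v (x + h) * w' x)
        + c * (v x * w' x) + a * (w (x + h) * w' x) + a * (w (x - h) * w' x)
        + b * (w x * w' x) := by
    intro x; rw [hc, ha, hb, hc, ha]; field_simp; ring
  -- integrability of all ten pieces
  have i1 : Integrable (fun x : ℝ => c * (v' x * w x)) := (l2mul hv'2 hw2).const_mul c
  have i2 : Integrable (fun x : ℝ => c * (w (x - h) * v' x)) := (l2mul hwm hv'2).const_mul c
  have i3 : Integrable (fun x : ℝ => a * (v (x + h) * v' x)) := (l2mul hvp hv'2).const_mul a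
  have i4 : Integrable (fun x : ℝ => a * (v (x - h) * v' x)) := (l2mul hvm hv'2).const_mul a
  have i5 : Integrable (fun x : ℝ => b * (v x * v' x)) := (l2mul hv2 hv'2).const_mul b
  have i6 : Integrable (fun x : ℝ => c * (v (x + h) * w' x)) := (l2mul hvp hw'2).const_mul c
  have i7 : Integrable (fun x : ℝ => c * (v x * w' x)) := (l2mul hv2 hw'2).const_mul c
  have i8 : Integrable (fun x : ℝ => a * (w (x + h) * w' x)) := (l2mul hwp hw'2).const_mul a
  have i9 : Integrable (fun x : ℝ => a * (w (x - h) * w' x)) := (l2mul hwm hw'2).const_mul a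
  have i10 : Integrable (fun x : ℝ => b * (w x * w' x)) := (l2mul hw2 hw'2).const_mul b
  rw [MeasureTheory.integral_congr_ae (Filter.Eventually.of_forall key)]
  have j2 : Integrable (fun x : ℝ => c * (v' x * w x) + c * (w (x - h) * v' x)) (volume : Measure ℝ) := i1.add i2
  have j3 : Integrable (fun x : ℝ => c * (v' x * w x) + c * (w (x - h) * v' x) + a * (v (x + h) * v' x)) (volume : Measure ℝ) := j2.add i3
  have j4 : Integrable (fun x : ℝ => c * (v' x * w x) + c * (w (x - h) * v' x) + a * (v (x + h) * v' x) + a * (v (x - h) * v' x)) (volume : Measure ℝ) := j3.add i4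
  have j5 : Integrable (fun x : ℝ => c * (v' x * w x) + c * (w (x - h) * v' x) + a * (v (x + h) * v' x) + a * (v (x - h) * v' x) + b * (v x * v' x)) (volume : Measure ℝ) := j4.add i5
  have j6 : Integrable (fun x : ℝ => c * (v' x * w x) + c * (w (x - h) * v' x) + a * (v (x + h) * v' x) + a * (v (x - h) * v' x) + b * (v x * v' x) + c * (v (x + h) * w' x)) (volume : Measure ℝ) := j5.add i6
  have j7 : Integrable (fun x : ℝ => c * (v' x * w x) + c * (w (x - h) * v' x) + a * (v (x + h) * v' x) + a * (v (x - h) * v' x) + b * (v x * v' x) + c * (v (x + h) * w' x) + c * (v x * w' x)) (volume : Measure ℝ) := j6.add i7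
  have j8 : Integrable (fun x : ℝ => c * (v' x * w x) + c * (w (x - h) * v' x) + a * (v (x + h) * v' x) + a * (v (x - h) * v' x) + b * (v x * v' x) + c * (v (x + h) * w' x) + c * (v x * w' x) + a * (w (x + h) * w' x)) (volume : Measure ℝ) := j7.add i8
  have j9 : Integrable (fun x : ℝ => c * (v' x * w x) + c * (w (x - h) * v' x) + a * (v (x + h) * v' x) + a * (v (x - h) * v' x) + b * (v x * v' x) + c * (v (x + h) * w' x) + c * (v x * w' x) + a * (w (x + h) * w' x) + a * (w (x - h) * w' x)) (volume : Measure ℝ) := j8.add i9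
  rw [integral_add j9 i10, integral_add j8 i9, integral_add j7 i8, integral_add j6 i7,
      integral_add j5 i6, integral_add j4 i5, integral_add j3 i4, integral_add j2 i3,
      integral_add i1 i2]
  simp only [integral_const_mul]
  rw [e3, e4, e5, hA2, hB2]
  linear_combination c * h1 + c * h2 + a * h3 + a * h4
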